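/- arXiv:2509.02909 — 4 statements merged into one kernel-verified Lean document; each statement's English description precedes it below -/
import Mathlib

section
/- Let Δ ≥ 4 be an even integer and set φ = π/Δ. For all integers j, k with 0 ≤ j ≤ Δ/2 − 1, 0 ≤ k ≤ Δ/2 − 1 and j ≠ k, and all signs s, t ∈ {+1, −1}, the squared overlap satisfies |⟨j_s | k_t⟩|² ≤ cos²(π/(2Δ)), where |j_s⟩ = (1/√2)(|0⟩ + s·e^{ijφ}|1⟩) and |k_t⟩ = (1/√2)(|0⟩ + t·e^{ikφ}|1⟩) are vectors in ℂ². -/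
open scoped InnerProductSpace

/-- The basis vector `|j_s⟩ = (1/√2)(|0⟩ + s·e^{ijφ}|1⟩)` in ℂ². -/
noncomputable def ket (φ : ℝ) (j : ℤ) (s : ℝ) : EuclideanSpace ℂ (Fin 2) :=
  WithLp.toLp 2 ![(1 / Real.sqrt 2 : ℂ),
    (s : ℂ) * Complex.exp (Complex.I * (j : ℂ) * (φ : ℂ)) / Real.sqrt 2]

lemma inner_ket (φ : ℝ) (j k : ℤ) (s t : ℝ) :
    ⟪ket φ j s, ket φ k t⟫_ℂ
      = (1 + (s:ℂ) * t * Complex.exp (Complex.I * ((k:ℂ) - (j:ℂ)) * φ)) / 2 := by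
  have h2 : ((Real.sqrt 2 : ℂ)) ≠ 0 := by
    simp [Complex.ofReal_ne_zero, Real.sqrt_ne_zero']
  have hss : ((Real.sqrt 2 : ℂ)) * Real.sqrt 2 = 2 := by
    rw [← Complex.ofReal_mul, Real.mul_self_sqrt (by norm_num : (0:ℝ) ≤ 2)]
    norm_num
  simp only [ket, PiLp.inner_apply, PiLp.toLp_apply, Fin.sum_univ_two, Matrix.cons_val_zero,
    Matrix.cons_val_one, Matrix.head_cons, RCLike.inner_apply, map_div₀, map_mul,
    map_one, Complex.conj_ofReal, ← Complex.exp_conj]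
  field_simp
  rw [sq, hss]; simp only [Complex.conj_I, map_intCast]
  rw [show (φ:ℂ) * -Complex.I * (j:ℂ) = -(Complex.I * ↑j * ↑φ) by ring,
    show Complex.I * (φ:ℂ) * ((k:ℂ) - (j:ℂ)) = Complex.I * ((k:ℂ) - (j:ℂ)) * φ by ring]
  have : Complex.exp (-(Complex.I * ↑j * ↑φ)) * Complex.exp (Complex.I * ↑k * ↑φ)
      = Complex.exp (Complex.I * ((k:ℂ) - (j:ℂ)) * φ) := by
    rw [← Complex.exp_add]; ring_nf
  linear_combination (s:ℂ) * t * 2 * this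

lemma norm_sq_form (c θ : ℝ) (hc : c^2 = 1) :
    ‖(1 + (c:ℂ) * Complex.exp (Complex.I * (θ:ℂ)))/2‖^2 = (1 + c * Real.cos θ)/2 := by
  have h : Complex.I * (θ:ℂ) = (θ:ℂ) * Complex.I := by ring
  rw [h, Complex.exp_mul_I, Complex.sq_norm, Complex.normSq_apply]
  simp [Complex.div_re, Complex.div_im, Complex.normSq, Complex.cos_ofReal_re,
    Complex.sin_ofReal_re, Complex.cos_ofReal_im, Complex.sin_ofReal_im]
  have := Real.sin_sq_add_cos_sq θ
  nlinarith [this, hc]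

theorem overlap_wrong_basis_bound (Δ : ℤ) (hE : Even Δ) (hΔ : 4 ≤ Δ)
    (φ : ℝ) (hφ : φ = Real.pi / (Δ : ℝ))
    (j k : ℤ) (hj0 : 0 ≤ j) (hj1 : j ≤ Δ / 2 - 1)
    (hk0 : 0 ≤ k) (hk1 : k ≤ Δ / 2 - 1) (hjk : j ≠ k)
    (s t : ℝ) (hs : s = 1 ∨ s = -1) (ht : t = 1 ∨ t = -1) :
    ‖⟪ket φ j s, ket φ k t⟫_ℂ‖ ^ 2 ≤ Real.cos (Real.pi / (2 * (Δ : ℝ))) ^ 2 := by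
  have hΔR : (4:ℝ) ≤ (Δ:ℝ) := by exact_mod_cast hΔ
  have hΔ0 : (0:ℝ) < (Δ:ℝ) := by linarith
  have hπ := Real.pi_pos
  have hφpos : 0 < φ := by rw [hφ]; positivity
  have hc : (s*t)^2 = 1 := by rcases hs with h|h <;> rcases ht with h'|h' <;> simp [h,h']
  set θ : ℝ := ((k:ℝ) - (j:ℝ)) * φ with hθ
  have h1 : ⟪ket φ j s, ket φ k t⟫_ℂ
      = (1 + ((s*t : ℝ):ℂ) * Complex.exp (Complex.I * (θ:ℂ)))/2 := by
    rw [inner_ket]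
    have hexp : Complex.I * ((k:ℂ) - (j:ℂ)) * (φ:ℂ) = Complex.I * (θ:ℂ) := by
      rw [hθ]; push_cast; ring
    rw [hexp]; push_cast; ring
  rw [h1, norm_sq_form (s*t) θ hc]
  have hcos2 : Real.cos (Real.pi / (2 * (Δ:ℝ))) ^ 2
      = 1/2 + Real.cos (Real.pi / (Δ:ℝ)) / 2 := by
    rw [Real.cos_sq]
    congr 2
    field_simp
  rw [hcos2]
  -- half of Δ in ℝ
  have hhalf : ((Δ/2 : ℤ) : ℝ) = (Δ:ℝ)/2 := by
    obtain ⟨d, hd⟩ := hE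
    subst hd
    have : (d + d) / 2 = d := by omega
    rw [this]; push_cast; ring
  -- bounds on |k - j|
  have hm1 : (1:ℝ) ≤ |(k:ℝ) - (j:ℝ)| := by
    have h' : 1 ≤ |k - j| := Int.one_le_abs (sub_ne_zero.mpr (Ne.symm hjk))
    have := (@Int.cast_le ℝ _ _ _).mpr h'
    push_cast at this
    simpa using this
  have hm2 : |(k:ℝ) - (j:ℝ)| ≤ (Δ:ℝ)/2 - 1 := by
    have h' : |k - j| ≤ Δ/2 - 1 := abs_le.mpr ⟨by omega, by omega⟩
    have := (@Int.cast_le ℝ _ _ _).mpr h'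
    push_cast at this
    rw [hhalf] at this
    simpa using this
  set u : ℝ := |(k:ℝ) - (j:ℝ)| * φ with hu
  have hcosθ : Real.cos θ = Real.cos u := by
    rw [hu, ← abs_of_nonneg hφpos.le, ← abs_mul, Real.cos_abs]
  have hu1 : φ ≤ u := by
    rw [hu]; nlinarith
  have hu2 : u ≤ Real.pi/2 - Real.pi/(Δ:ℝ) := by
    have : u ≤ ((Δ:ℝ)/2 - 1) * φ := by
      rw [hu]; nlinarith
    rw [hφ] at this
    have heq : ((Δ:ℝ)/2 - 1) * (Real.pi/(Δ:ℝ)) = Real.pi/2 - Real.pi/(Δ:ℝ) := by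
      field_simp
    linarith [heq ▸ this]
  have hφle : φ ≤ Real.pi/4 := by
    rw [hφ]
    exact div_le_div_of_nonneg_left hπ.le (by norm_num) hΔR
  have hcosu_nonneg : 0 ≤ Real.cos u :=
    Real.cos_nonneg_of_mem_Icc ⟨by linarith, by linarith⟩
  have hcosφ_nonneg : 0 ≤ Real.cos (Real.pi/(Δ:ℝ)) := by
    rw [← hφ]
    exact Real.cos_nonneg_of_mem_Icc ⟨by linarith, by linarith⟩
  have hkey : s * t * Real.cos θ ≤ Real.cos (Real.pi/(Δ:ℝ)) := by
    rw [hcosθ]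
    have hst : s*t = 1 ∨ s*t = -1 := by
      rcases hs with h|h <;> rcases ht with h'|h' <;> simp [h,h']
    rcases hst with h|h
    · rw [h, one_mul, ← hφ]
      exact Real.cos_le_cos_of_nonneg_of_le_pi hφpos.le (by linarith) hu1
    · rw [h]; linarith
  linarith
end

section
/- Let Δ ≥ 2 and D ≥ 1 be integers, let N = Δ^D, and set φ = π/N. For all integers j, k with 0 ≤ j, 0 ≤ k, 2j ≤ N − 2, 2k ≤ N − 2 and j ≠ k, and all signs s, t ∈ {+1, −1}, the squared overlap satisfies |⟨j_s | k_t⟩|² ≤ cos²(π/(2Δ^D)), where |j_s⟩ = (1/√2)(|0⟩ + s·e^{ijφ}|1⟩) and |k_t⟩ = (1/√2)(|0⟩ + t·e^{ikφ}|1⟩) are vectors in ℂ². -/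
open scoped InnerProductSpace

lemma ket_inner (φ : ℝ) (j k : ℤ) (s t : ℝ) :
    ⟪ket φ j s, ket φ k t⟫_ℂ =
      (1 + (s*t : ℝ) * Complex.exp (Complex.I * ((k - j : ℤ) : ℂ) * (φ:ℂ))) / 2 := by
  simp [ket, PiLp.inner_apply, Fin.sum_univ_two, RCLike.inner_apply, map_div₀, div_mul_div_comm,
    ← Complex.exp_conj, ← Complex.exp_add]
  have he : Complex.exp (Complex.I * ((k:ℂ) - (j:ℂ)) * φ)
      = Complex.exp (-(Complex.I * j * φ)) * Complex.exp (Complex.I * k * φ) := by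
    rw [← Complex.exp_add]; congr 1; ring
  have hs2 : ((Real.sqrt 2 : ℂ)) ≠ 0 := by
    norm_cast; positivity
  push_cast
  rw [he]
  have h2 : ((Real.sqrt 2:ℂ) * Real.sqrt 2) = 2 := by
    rw [← Complex.ofReal_mul, Real.mul_self_sqrt (by norm_num : (0:ℝ) ≤ 2)]; norm_num
  field_simp
  rw [sq, h2]
  ring

lemma ket_norm_sq (c θ : ℝ) (hc : c^2 = 1) :
    ‖((1 + (c:ℂ) * Complex.exp (Complex.I * θ))/2 : ℂ)‖^2 = (1 + c * Real.cos θ)/2 := by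
  rw [mul_comm Complex.I (θ:ℂ), Complex.exp_mul_I]
  have hz : (1 + (c:ℂ) * (Complex.cos θ + Complex.sin θ * Complex.I))/2
      = (((1 + c * Real.cos θ)/2 : ℝ) : ℂ) + (((c * Real.sin θ)/2 : ℝ) : ℂ) * Complex.I := by
    push_cast [Complex.ofReal_cos, Complex.ofReal_sin]; ring
  rw [hz, Complex.sq_norm, Complex.normSq_add_mul_I]
  have h1 : Real.sin θ ^2 + Real.cos θ ^2 = 1 := Real.sin_sq_add_cos_sq θ
  nlinarith [h1, hc]

lemma key_trig (N : ℝ) (hN : 4 ≤ N) (m : ℝ) (hm1 : 1 ≤ |m|) (hm2 : 2*|m| ≤ N - 2)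
    (c : ℝ) (hc : c = 1 ∨ c = -1) :
    (1 + c * Real.cos (m * (Real.pi/N)))/2 ≤ Real.cos (Real.pi/(2*N))^2 := by
  have hNpos : (0:ℝ) < N := by linarith
  have hpi := Real.pi_pos
  have hcos2 : Real.cos (Real.pi/(2*N))^2 = 1/2 + Real.cos (Real.pi/N)/2 := by
    rw [Real.cos_sq]
    congr 2
    field_simp
  rw [hcos2]
  set x := Real.pi / N with hx
  have h0 : 0 ≤ x := by positivity
  have hdiv : x * N = Real.pi := div_mul_cancel₀ _ hNpos.ne'
  have hub : |m| * x ≤ (N-2)/2 * x := mul_le_mul_of_nonneg_right (by linarith) h0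
  have hlb : x ≤ |m| * x := le_mul_of_one_le_left h0 hm1
  have hub2 : |m| * x ≤ Real.pi - x := by nlinarith
  have key : c * Real.cos (m * x) ≤ Real.cos x := by
    have habs : Real.cos (m * x) = Real.cos (|m| * x) := by
      rw [← Real.cos_abs, ← Real.cos_abs (|m| * _), abs_mul, abs_mul, abs_abs]
    rcases hc with rfl | rfl
    · rw [one_mul, habs]
      exact Real.cos_le_cos_of_nonneg_of_le_pi h0 (by nlinarith) hlb
    · rw [neg_one_mul, habs, ← Real.cos_pi_sub]
      exact Real.cos_le_cos_of_nonneg_of_le_pi h0 (by nlinarith) (by nlinarith)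
  linarith

theorem overlap_wrong_basis_bound_full_path (Δ D : ℕ) (hΔ : 2 ≤ Δ) (hD : 1 ≤ D)
    (N : ℤ) (hN : N = (Δ : ℤ) ^ D)
    (φ : ℝ) (hφ : φ = Real.pi / (N : ℝ))
    (j k : ℤ) (hj0 : 0 ≤ j) (hj1 : 2 * j ≤ N - 2)
    (hk0 : 0 ≤ k) (hk1 : 2 * k ≤ N - 2) (hjk : j ≠ k)
    (s t : ℝ) (hs : s = 1 ∨ s = -1) (ht : t = 1 ∨ t = -1) :
    ‖⟪ket φ j s, ket φ k t⟫_ℂ‖ ^ 2 ≤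
      Real.cos (Real.pi / (2 * (Δ : ℝ) ^ D)) ^ 2 := by
  -- basic integer facts
  have habsZ : 1 ≤ |k - j| := Int.one_le_abs (sub_ne_zero.mpr (Ne.symm hjk))
  have habsZ2 : 2 * |k - j| ≤ N - 2 := by
    rcases abs_sub_le_iff.mp (le_refl |k - j|) with ⟨h1, h2⟩
    rcases le_or_gt (k - j) 0 with h | h
    · rw [abs_of_nonpos h]; omega
    · rw [abs_of_pos h]; omega
  have hN4Z : 4 ≤ N := by omega
  have hN4 : (4:ℝ) ≤ (N:ℝ) := by exact_mod_cast hN4Z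
  have hNr : ((Δ:ℝ))^D = (N:ℝ) := by rw [hN]; push_cast; ring
  -- inner product
  have hst : s * t = 1 ∨ s * t = -1 := by
    rcases hs with rfl | rfl <;> rcases ht with rfl | rfl <;> norm_num
  have hst2 : (s*t)^2 = 1 := by rcases hst with h | h <;> rw [h] <;> norm_num
  have harg : Complex.I * ((k - j : ℤ) : ℂ) * (φ:ℂ)
      = Complex.I * ((((k - j : ℤ) : ℝ) * φ : ℝ) : ℂ) := by
    push_cast; ring
  subst hφ
  rw [ket_inner, harg, ket_norm_sq _ _ hst2, hNr]
  exact key_trig (N:ℝ) hN4 ((k - j : ℤ) : ℝ)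
    (by rw [← Int.cast_abs]; exact_mod_cast habsZ)
    (by rw [← Int.cast_abs]; exact_mod_cast habsZ2)
    (s*t) hst
end

section
/- For all integers Δ ≥ 2 and D ≥ 1, one has D · log(1/cos²(π/(2Δ^D))) ≤ log(1/cos²(π/(2Δ))); equivalently, cos(π/(2Δ^D))^{2D} ≥ cos²(π/(2Δ)), i.e. 1/log(1/cos²(π/(2Δ^D))) ≥ D/log(1/cos²(π/(2Δ))). -/
open Real

lemma cos_nat_mul_le_pow (y : ℝ) (hy : 0 ≤ y) :
    ∀ n : ℕ, (n : ℝ) * y ≤ Real.pi / 2 → Real.cos ((n : ℝ) * y) ≤ Real.cos y ^ n := by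
  intro n
  induction n with
  | zero => simp
  | succ n ih =>
    intro hle
    have hny : (n : ℝ) * y ≤ ((n : ℝ) + 1) * y := by nlinarith
    have hny2 : (n : ℝ) * y ≤ Real.pi / 2 := le_trans hny (by push_cast at hle ⊢; linarith)
    have hyle : y ≤ Real.pi / 2 := by
      have : (1 : ℝ) * y ≤ ((n : ℝ) + 1) * y := by nlinarith
      push_cast at hle; linarith
    have hcy : 0 ≤ Real.cos y := Real.cos_nonneg_of_mem_Icc ⟨by linarith, hyle⟩
    have hprod : (0:ℝ) ≤ (n : ℝ) * y := by positivity
    have hcny : 0 ≤ Real.cos ((n : ℝ) * y) :=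
      Real.cos_nonneg_of_mem_Icc ⟨by linarith [Real.pi_pos], hny2⟩
    have hsy : 0 ≤ Real.sin y := Real.sin_nonneg_of_nonneg_of_le_pi hy (by linarith [Real.pi_pos])
    have hsny : 0 ≤ Real.sin ((n : ℝ) * y) :=
      Real.sin_nonneg_of_nonneg_of_le_pi (by positivity) (by linarith [Real.pi_pos])
    have key : Real.cos (((n : ℕ) + 1 : ℝ) * y) ≤ Real.cos ((n : ℝ) * y) * Real.cos y := by
      have : ((n : ℝ) + 1) * y = (n : ℝ) * y + y := by ring
      rw [this, Real.cos_add]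
      nlinarith
    push_cast at key ⊢
    calc Real.cos (((n : ℝ) + 1) * y) ≤ Real.cos ((n : ℝ) * y) * Real.cos y := key
      _ ≤ Real.cos y ^ n * Real.cos y := by
          have := ih hny2
          nlinarith
      _ = Real.cos y ^ (n + 1) := by ring

lemma mul_le_pow_nat (Δ D : ℕ) (hΔ : 2 ≤ Δ) (hD : 1 ≤ D) : D * Δ ≤ Δ ^ D := by
  induction D with
  | zero => omega
  | succ n ih =>
    rcases Nat.eq_or_lt_of_le hD with h | h
    · simp [← h]
    · have hn : 1 ≤ n := by omega
      have h1 := ih hn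
      have h2 : Δ ≤ Δ ^ n := Nat.le_self_pow (by omega) Δ
      calc (n + 1) * Δ = n * Δ + Δ := by ring
        _ ≤ Δ ^ n + Δ ^ n := by omega
        _ ≤ Δ * Δ ^ n := by nlinarith
        _ = Δ ^ (n + 1) := by ring

theorem full_path_encoding_not_better (Δ D : ℕ) (hΔ : 2 ≤ Δ) (hD : 1 ≤ D) :
    (D : ℝ) * Real.log (1 / Real.cos (Real.pi / (2 * (Δ : ℝ) ^ D)) ^ 2) ≤
        Real.log (1 / Real.cos (Real.pi / (2 * (Δ : ℝ))) ^ 2) ∧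
    Real.cos (Real.pi / (2 * (Δ : ℝ) ^ D)) ^ (2 * D) ≥
        Real.cos (Real.pi / (2 * (Δ : ℝ))) ^ 2 ∧
    1 / Real.log (1 / Real.cos (Real.pi / (2 * (Δ : ℝ) ^ D)) ^ 2) ≥
        (D : ℝ) / Real.log (1 / Real.cos (Real.pi / (2 * (Δ : ℝ))) ^ 2) := by
  have hπ := Real.pi_pos
  have hΔR : (2 : ℝ) ≤ (Δ : ℝ) := by exact_mod_cast hΔ
  have hΔ0 : (0 : ℝ) < Δ := by linarith
  have hΔD0 : (0 : ℝ) < (Δ : ℝ) ^ D := pow_pos hΔ0 D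
  have hΔD2 : (2 : ℝ) ≤ (Δ : ℝ) ^ D :=
    le_trans hΔR (le_self_pow₀ (by linarith) (by omega))
  set y := Real.pi / (2 * (Δ : ℝ) ^ D) with hy_def
  set x := Real.pi / (2 * (Δ : ℝ)) with hx_def
  have hy0 : 0 < y := by positivity
  have hx0 : 0 < x := by positivity
  have hxlt : x < Real.pi / 2 := by
    rw [hx_def, div_lt_div_iff₀ (by positivity) (by norm_num)]
    nlinarith
  have hylt : y < Real.pi / 2 := by
    rw [hy_def, div_lt_div_iff₀ (by positivity) (by norm_num)]
    nlinarith
  -- key: D * y ≤ x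
  have hnat : (D : ℝ) * (Δ : ℝ) ≤ (Δ : ℝ) ^ D := by
    exact_mod_cast mul_le_pow_nat Δ D hΔ hD
  have hkey : (D : ℝ) * y ≤ x := by
    have e : (D : ℝ) * y = (D * Real.pi) / (2 * (Δ : ℝ) ^ D) := by rw [hy_def]; ring
    rw [e, hx_def, div_le_div_iff₀ (by positivity) (by positivity)]
    have hD0 : (0 : ℝ) < D := by exact_mod_cast hD
    nlinarith
  have hDy2 : (D : ℝ) * y ≤ Real.pi / 2 := le_trans hkey (le_of_lt hxlt)
  have hcos1 : Real.cos ((D : ℝ) * y) ≤ Real.cos y ^ D :=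
    cos_nat_mul_le_pow y (le_of_lt hy0) D hDy2
  have hcos2 : Real.cos x ≤ Real.cos ((D : ℝ) * y) := by
    apply Real.cos_le_cos_of_nonneg_of_le_pi (by positivity) (by linarith) hkey
  have hcxpos : 0 < Real.cos x := Real.cos_pos_of_mem_Ioo ⟨by linarith, hxlt⟩
  have hcypos : 0 < Real.cos y := Real.cos_pos_of_mem_Ioo ⟨by linarith, hylt⟩
  have hcxle : Real.cos x ≤ Real.cos y ^ D := le_trans hcos2 hcos1
  -- part 2
  have part2 : Real.cos y ^ (2 * D) ≥ Real.cos x ^ 2 := by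
    have : Real.cos x ^ 2 ≤ (Real.cos y ^ D) ^ 2 :=
      pow_le_pow_left₀ (le_of_lt hcxpos) hcxle 2
    calc Real.cos x ^ 2 ≤ (Real.cos y ^ D) ^ 2 := this
      _ = Real.cos y ^ (2 * D) := by rw [← pow_mul, mul_comm]
  -- positivity of logs
  have hcylt1 : Real.cos y < 1 := by
    have := Real.cos_lt_cos_of_nonneg_of_le_pi le_rfl (by linarith) hy0
    simpa using this
  have hcxlt1 : Real.cos x < 1 := by
    have := Real.cos_lt_cos_of_nonneg_of_le_pi le_rfl (by linarith) hx0
    simpa using this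
  have hAy : 0 < Real.log (1 / Real.cos y ^ 2) := by
    apply Real.log_pos
    rw [lt_div_iff₀ (by positivity)]
    nlinarith
  have hAx : 0 < Real.log (1 / Real.cos x ^ 2) := by
    apply Real.log_pos
    rw [lt_div_iff₀ (by positivity)]
    nlinarith
  -- part 1
  have part1 : (D : ℝ) * Real.log (1 / Real.cos y ^ 2) ≤ Real.log (1 / Real.cos x ^ 2) := by
    have hlog : Real.log (Real.cos x ^ 2) ≤ Real.log (Real.cos y ^ (2 * D)) :=
      Real.log_le_log (by positivity) part2
    have e1 : Real.log (Real.cos y ^ (2 * D)) = (D : ℝ) * Real.log (Real.cos y ^ 2) := by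
      rw [pow_mul, Real.log_pow]
    rw [one_div, one_div, Real.log_inv, Real.log_inv]
    rw [e1] at hlog
    nlinarith
  refine ⟨part1, part2, ?_⟩
  -- part 3
  have hD0 : (0 : ℝ) < D := by exact_mod_cast hD
  have hDAy : 0 < (D : ℝ) * Real.log (1 / Real.cos y ^ 2) := by positivity
  calc (D : ℝ) / Real.log (1 / Real.cos x ^ 2)
      ≤ (D : ℝ) / ((D : ℝ) * Real.log (1 / Real.cos y ^ 2)) :=
        div_le_div_of_nonneg_left (le_of_lt hD0) hDAy part1
    _ = 1 / Real.log (1 / Real.cos y ^ 2) := by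
        field_simp
end

section
/- Consider the 6-vertex graph with vertices S, U, V, T, U', V', where S, U, V form a triangle and T, U', V' are leaves attached to S, U, V respectively, and where at each of the degree-3 vertices S, U, V the three incident edges receive distinct port numbers from {0, 1, 2} (each leaf has its single edge with port 0 at the leaf). Then for every oblivious deterministic policy — i.e., every function a : Bool → {0,1,2} prescribing, as a function of whether a pebble is present at the current vertex, the port through which the agent exits a degree-3 vertex (the agent at a degree-1 vertex other than T exits through its only port) — and for every pebble placement b : {S, U, V, U', V'} → Bool, there exists an assignment of the port numbers at S, U, V (i.e., a choice of the three permutations of {0,1,2}) such that the infinite walk starting at S determined by a and b never visits the treasure vertex T. -/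
/-- The six vertices of the graph `G`: a triangle `S, U, V` with leaves
`T` (attached to `S`), `U'` (attached to `U`) and `V'` (attached to `V`). -/
inductive Vtx : Type
  | S | U | V | T | U' | V'
  deriving DecidableEq

open Vtx

/-- One step of the walk of an oblivious agent. The permutations
`σS, σU, σV : Equiv.Perm (Fin 3)` describe the assignment of the port numbers
`{0, 1, 2}` to the three edges incident to each degree-3 vertex
(the fixed enumerations of the neighbours of `S`, `U`, `V` being
`[T, U, V]`, `[U', S, V]` and `[V', S, U]` respectively).
The oblivious policy `a : Bool → Fin 3` chooses an exit port as a function of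
whether a pebble is present at the current (degree-3) vertex, according to the
pebble placement `b`. At a degree-1 vertex the agent exits through its only port. -/
def step (σS σU σV : Equiv.Perm (Fin 3)) (a : Bool → Fin 3) (b : Vtx → Bool) :
    Vtx → Vtx
  | .S => ![Vtx.T, Vtx.U, Vtx.V] (σS (a (b .S)))
  | .U => ![Vtx.U', Vtx.S, Vtx.V] (σU (a (b .U)))
  | .V => ![Vtx.V', Vtx.S, Vtx.U] (σV (a (b .V)))
  | .T => .S
  | .U' => .U
  | .V' => .V

/-- The infinite walk starting at `S` determined by the port assignment,
the oblivious policy `a` and the pebble placement `b`. -/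
def walk (σS σU σV : Equiv.Perm (Fin 3)) (a : Bool → Fin 3) (b : Vtx → Bool) :
    ℕ → Vtx
  | 0 => .S
  | n + 1 => step σS σU σV a b (walk σS σU σV a b n)

/-- Impossibility of deterministic treasure hunt by an oblivious agent:
for every oblivious deterministic policy `a` and every pebble placement `b`,
there is an assignment of port numbers at `S`, `U`, `V` such that the walk
starting at `S` never visits the treasure vertex `T`. -/
theorem oblivious_agent_impossibility (a : Bool → Fin 3) (b : Vtx → Bool) :
    ∃ σS σU σV : Equiv.Perm (Fin 3),
      ∀ n : ℕ, walk σS σU σV a b n ≠ Vtx.T := by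
  refine ⟨Equiv.swap (a (b .S)) 1, Equiv.swap (a (b .U)) 1, Equiv.swap (a (b .V)) 1, ?_⟩
  have key : ∀ n, walk (Equiv.swap (a (b .S)) 1) (Equiv.swap (a (b .U)) 1)
      (Equiv.swap (a (b .V)) 1) a b n = Vtx.S ∨
      walk (Equiv.swap (a (b .S)) 1) (Equiv.swap (a (b .U)) 1)
      (Equiv.swap (a (b .V)) 1) a b n = Vtx.U := by
    intro n
    induction n with
    | zero => exact Or.inl rfl
    | succ n ih =>
      rcases ih with h | h <;>
        simp [walk, step, h, Equiv.swap_apply_left]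
  intro n hn
  rcases key n with h | h <;> simp [h] at hn
end
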